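/- arXiv:2309.05778 — 2 statements merged into one kernel-verified Lean document; each statement's English description precedes it below -/
import Mathlib

section
/- Let A ∈ ℝ^{n×n}, X ∈ ℝ^{n×n} symmetric. If all eigenvalues of A lie in the open left half-plane and -AᵀX - XA is positive semidefinite, then X is positive semidefinite. -/
open Matrix

open scoped ENNReal NNReal Polynomial Nat
open NormedSpace Filter

attribute [local instance] Matrix.linftyOpSemiNormedRing Matrix.linftyOpNormedRing
  Matrix.linftyOpNormedAlgebra

namespace StmtAux

variable {n : ℕ}

lemma mulVec_pow_eig {μ : ℂ} {M : Matrix (Fin n) (Fin n) ℂ} {v : Fin n → ℂ}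
    (hv : M *ᵥ v = μ • v) (k : ℕ) : (M ^ k) *ᵥ v = μ ^ k • v := by
  induction k with
  | zero => simp
  | succ k ih =>
    rw [pow_succ, ← Matrix.mulVec_mulVec, hv, Matrix.mulVec_smul, ih, pow_succ, smul_smul,
      mul_comm]

lemma mulVec_aeval_eig {μ : ℂ} {M : Matrix (Fin n) (Fin n) ℂ} {v : Fin n → ℂ}
    (hv : M *ᵥ v = μ • v) (p : ℂ[X]) :
    (Polynomial.aeval M p) *ᵥ v = p.eval μ • v := by
  induction p using Polynomial.induction_on' with
  | add p q hp hq =>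
    rw [map_add, Matrix.add_mulVec, hp, hq, Polynomial.eval_add, add_smul]
  | monomial k c =>
    rw [Polynomial.aeval_monomial, Polynomial.eval_monomial,
      Algebra.algebraMap_eq_smul_one, smul_mul_assoc, one_mul,
      Matrix.smul_mulVec, mulVec_pow_eig hv, smul_smul]

lemma mulVec_exp_eig {μ : ℂ} {M : Matrix (Fin n) (Fin n) ℂ} {v : Fin n → ℂ}
    (hv : M *ᵥ v = μ • v) : (exp M) *ᵥ v = Complex.exp μ • v := by
  classical
  let L : Matrix (Fin n) (Fin n) ℂ →ₗ[ℂ] (Fin n → ℂ) :=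
    { toFun := fun C => C *ᵥ v
      map_add' := fun C D => Matrix.add_mulVec _ _ _
      map_smul' := fun c C => Matrix.smul_mulVec c C v }
  let L' := LinearMap.toContinuousLinearMap L
  have h1 : HasSum (fun k : ℕ => ((k ! : ℂ)⁻¹) • M ^ k) (exp M) := by
    exact (by simpa [expSeries_apply_eq] using expSeries_hasSum_exp (𝕂 := ℂ) M :)
  have h2 : HasSum (fun k : ℕ => ((k ! : ℂ)⁻¹ * μ ^ k) • v) (exp M *ᵥ v) := by
    have := h1.mapL L'
    simp only [_root_.map_smul] at this
    have he : ∀ k : ℕ, L' (M ^ k) = μ ^ k • v := fun k => mulVec_pow_eig hv k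
    simp only [he, smul_smul] at this
    exact this
  have h3 : HasSum (fun k : ℕ => ((k ! : ℂ)⁻¹ * μ ^ k) • v) (exp μ • v) := by
    have hc := expSeries_hasSum_exp (𝕂 := ℂ) μ
    rw [funext fun k => expSeries_apply_eq (𝕂 := ℂ) μ k] at hc
    have := hc.smul_const v
    simpa only [smul_smul, smul_eq_mul] using this
  rw [h2.unique h3, Complex.exp_eq_exp_ℂ]

lemma exists_poly_exp (M : Matrix (Fin n) (Fin n) ℂ) :
    ∃ p : ℂ[X], Polynomial.aeval M p = exp M := by
  have hmem : exp M ∈ Algebra.adjoin ℂ ({M} : Set _) := by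
    have hclosed := Submodule.closed_of_finiteDimensional
      (Subalgebra.toSubmodule (Algebra.adjoin ℂ ({M} : Set _)))
    have h1 : HasSum (fun k : ℕ => ((k ! : ℂ)⁻¹) • M ^ k) (exp M) := by
      exact (by simpa [expSeries_apply_eq] using expSeries_hasSum_exp (𝕂 := ℂ) M :)
    have hm := hclosed.mem_of_tendsto h1.tendsto_sum_nat
      (Filter.Eventually.of_forall fun s => Submodule.sum_mem _ fun k _ =>
        Submodule.smul_mem _ _ ((Subalgebra.mem_toSubmodule _).mpr
          (Subalgebra.pow_mem _ (Algebra.subset_adjoin (Set.mem_singleton M)) k)))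
    exact (Subalgebra.mem_toSubmodule _).mp hm
  rw [Algebra.adjoin_singleton_eq_range_aeval] at hmem
  obtain ⟨p, hp⟩ := hmem
  exact ⟨p, hp⟩

lemma exists_eigenvector {M : Matrix (Fin n) (Fin n) ℂ} {μ : ℂ} (hμ : μ ∈ spectrum ℂ M) :
    ∃ v : Fin n → ℂ, v ≠ 0 ∧ M *ᵥ v = μ • v := by
  have h1 : μ ∈ spectrum ℂ (Matrix.toLinAlgEquiv' M) := by
    rwa [AlgEquiv.spectrum_eq Matrix.toLinAlgEquiv']
  have h2 : Module.End.HasEigenvalue (Matrix.toLinAlgEquiv' M) μ :=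
    Module.End.hasEigenvalue_iff_mem_spectrum.mpr h1
  obtain ⟨v, hv⟩ := h2.exists_hasEigenvector
  refine ⟨v, hv.2, ?_⟩
  have := hv.apply_eq_smul
  rwa [Matrix.toLinAlgEquiv'_apply] at this



lemma pow_tendsto_zero {𝔸 : Type*} [NormedRing 𝔸] [NormedAlgebra ℂ 𝔸] [CompleteSpace 𝔸]
    {b : 𝔸} (hb : spectralRadius ℂ b < 1) :
    Filter.Tendsto (fun k : ℕ => b ^ k) Filter.atTop (nhds 0) := by
  obtain ⟨c, hc1, hc2⟩ := exists_between hb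
  have hgel := spectrum.pow_nnnorm_pow_one_div_tendsto_nhds_spectralRadius b
  have hev : ∀ᶠ k : ℕ in atTop, ((‖b ^ k‖₊ : ℝ≥0∞)) ^ (1 / (k : ℝ)) < c :=
    hgel.eventually_lt_const hc1
  have hbound : ∀ᶠ k : ℕ in atTop, (‖b ^ k‖₊ : ℝ≥0∞) ≤ c ^ (k : ℝ) := by
    filter_upwards [hev, Filter.eventually_gt_atTop 0] with k hk hk0
    have hkne : (k : ℝ) ≠ 0 := Nat.cast_ne_zero.mpr hk0.ne'
    calc (‖b ^ k‖₊ : ℝ≥0∞) = ((‖b ^ k‖₊ : ℝ≥0∞) ^ (1 / (k : ℝ))) ^ (k : ℝ) := by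
          rw [← ENNReal.rpow_mul, one_div, inv_mul_cancel₀ hkne, ENNReal.rpow_one]
      _ ≤ c ^ (k : ℝ) := ENNReal.rpow_le_rpow hk.le (Nat.cast_nonneg k)
  have hc0 : Tendsto (fun k : ℕ => (c : ℝ≥0∞) ^ (k : ℝ)) atTop (nhds 0) := by
    simp_rw [ENNReal.rpow_natCast]
    exact ENNReal.tendsto_pow_atTop_nhds_zero_of_lt_one hc2
  have h0 : Tendsto (fun k : ℕ => (‖b ^ k‖₊ : ℝ≥0∞)) atTop (nhds 0) :=
    tendsto_of_tendsto_of_tendsto_of_le_of_le' tendsto_const_nhds hc0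
      (Filter.Eventually.of_forall fun k => zero_le) hbound
  have h1 : Tendsto (fun k : ℕ => ‖b ^ k‖₊) atTop (nhds 0) := by
    rw [← ENNReal.coe_zero] at h0
    exact ENNReal.tendsto_coe.mp h0
  rw [tendsto_zero_iff_norm_tendsto_zero]
  have h2 : Tendsto (fun k : ℕ => ((‖b ^ k‖₊ : ℝ≥0) : ℝ)) atTop (nhds ((0 : ℝ≥0) : ℝ)) :=
    NNReal.tendsto_coe.mpr h1
  simpa [coe_nnnorm] using h2


lemma nnnorm_map_ofReal (C : Matrix (Fin n) (Fin n) ℝ) :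
    ‖C.map (Complex.ofReal)‖₊ = ‖C‖₊ := by
  simp [Matrix.linfty_opNNNorm_def, Matrix.map_apply]

lemma specRadius_exp_lt_one [Nonempty (Fin n)]
    {M : Matrix (Fin n) (Fin n) ℂ} (hM : ∀ μ ∈ spectrum ℂ M, μ.re < 0) :
    spectralRadius ℂ (exp M) < 1 := by
  have h := spectrum.spectralRadius_lt_of_forall_lt (a := exp M) (r := 1) ?_
  · simpa using h
  intro z hz
  obtain ⟨p, hp⟩ := exists_poly_exp M
  rw [← hp, spectrum.map_polynomial_aeval_of_nonempty M p (spectrum.nonempty M)] at hz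
  obtain ⟨μ, hμ, rfl⟩ := hz
  obtain ⟨v, hv0, hv⟩ := exists_eigenvector hμ
  have h1 : (Polynomial.aeval M p) *ᵥ v = p.eval μ • v := mulVec_aeval_eig hv p
  rw [hp, mulVec_exp_eig hv] at h1
  have h2 : p.eval μ = Complex.exp μ := smul_left_injective ℂ hv0 h1.symm
  have h3 : ‖Complex.exp μ‖ < 1 := by
    rw [Complex.norm_exp]
    exact Real.exp_lt_one_iff.mpr (hM μ hμ)
  show ‖Polynomial.eval μ p‖₊ < 1
  rw [h2]
  exact_mod_cast h3

lemma key_tendsto [Nonempty (Fin n)] (A : Matrix (Fin n) (Fin n) ℝ)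
    (hA : ∀ μ ∈ spectrum ℂ (A.map Complex.ofReal), μ.re < 0) :
    Tendsto (fun k : ℕ => (exp A) ^ k) atTop (nhds 0) := by
  set M := A.map Complex.ofReal with hM
  have hcont : Continuous (Complex.ofRealHom.mapMatrix (m := Fin n)) := by
    show Continuous fun C : Matrix (Fin n) (Fin n) ℝ => C.map (Complex.ofReal : ℝ → ℂ)
    exact continuous_id.matrix_map Complex.continuous_ofReal
  have hmap : (exp A).map Complex.ofReal = exp M := by
    have h1 := map_exp (Complex.ofRealHom.mapMatrix (m := Fin n)) hcont A
    calc (exp A).map Complex.ofReal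
        = Complex.ofRealHom.mapMatrix (exp A) := rfl
      _ = exp (Complex.ofRealHom.mapMatrix A) := h1
      _ = exp M := rfl
  have hnorm : ∀ k : ℕ, ‖(exp A) ^ k‖₊ = ‖(exp M) ^ k‖₊ := by
    intro k
    have h2 : ((exp A) ^ k).map Complex.ofReal = (exp M) ^ k := by
      rw [← hmap]
      calc ((exp A) ^ k).map Complex.ofReal
          = Complex.ofRealHom.mapMatrix ((exp A) ^ k) := rfl
        _ = (Complex.ofRealHom.mapMatrix (exp A)) ^ k := map_pow _ _ _
        _ = ((exp A).map Complex.ofReal) ^ k := rfl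
    rw [← h2, nnnorm_map_ofReal]
  have hrad := specRadius_exp_lt_one hA
  have h0 := pow_tendsto_zero hrad
  rw [tendsto_zero_iff_norm_tendsto_zero] at h0
  refine tendsto_zero_iff_norm_tendsto_zero.mpr ?_
  have : (fun k : ℕ => ‖(exp A) ^ k‖) = fun k : ℕ => ‖(exp M) ^ k‖ := by
    funext k
    have := hnorm k
    simpa [← coe_nnnorm] using congrArg (fun x : ℝ≥0 => (x : ℝ)) this
  rw [this]
  exact h0

lemma quad_eq (C S : Matrix (Fin n) (Fin n) ℝ) (x : Fin n → ℝ) :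
    dotProduct x ((Cᵀ * S * C) *ᵥ x)
      = dotProduct (C *ᵥ x) (S *ᵥ (C *ᵥ x)) := by
  rw [← Matrix.mulVec_mulVec, ← Matrix.mulVec_mulVec, Matrix.dotProduct_mulVec x Cᵀ _,
    Matrix.vecMul_transpose]

end StmtAux

set_option maxHeartbeats 1000000 in
/-- If `A` is Hurwitz (all eigenvalues in the open left half-plane), `X` is symmetric, and
`-AᵀX - XA` is positive semidefinite, then `X` is positive semidefinite. -/
theorem stmt_0 {n : ℕ} (A X : Matrix (Fin n) (Fin n) ℝ)
    (hA : ∀ μ ∈ spectrum ℂ (A.map (Complex.ofReal)), μ.re < 0)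
    (hX : Xᵀ = X)
    (hPSD : (-(Aᵀ * X) - X * A).PosSemidef) :
    X.PosSemidef := by
  classical
  refine Matrix.posSemidef_iff_dotProduct_mulVec.mpr ⟨?_, ?_⟩
  · show Xᴴ = X
    rw [Matrix.conjTranspose_eq_transpose_of_trivial, hX]
  intro x
  show 0 ≤ dotProduct (star x) (X *ᵥ x)
  rcases Nat.eq_zero_or_pos n with hn | hn
  · subst hn
    simp [dotProduct]
  haveI : Nonempty (Fin n) := ⟨⟨0, hn⟩⟩
  have hstar : star x = x := by simp
  rw [hstar]
  have hQquad : ∀ y : Fin n → ℝ, 0 ≤ dotProduct y ((-(Aᵀ * X) - X * A) *ᵥ y) := by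
    intro y
    simpa using hPSD.dotProduct_mulVec_nonneg y
  set Mt : ℝ → Matrix (Fin n) (Fin n) ℝ := fun t => NormedSpace.exp (t • A) with hMt
  set Nt : ℝ → Matrix (Fin n) (Fin n) ℝ := fun t => NormedSpace.exp (t • Aᵀ) with hNt
  have hNT : ∀ t, Nt t = (Mt t)ᵀ := fun t => by
    rw [hMt, hNt]; dsimp only
    rw [show t • Aᵀ = (t • A)ᵀ from (Matrix.transpose_smul t A).symm, Matrix.exp_transpose]
  let lin : Matrix (Fin n) (Fin n) ℝ →ₗ[ℝ] ℝ :=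
    { toFun := fun C => dotProduct x (C *ᵥ x)
      map_add' := fun C D => by simp [Matrix.add_mulVec, dotProduct_add]
      map_smul' := fun c C => by simp [Matrix.smul_mulVec, dotProduct_smul] }
  let clin := LinearMap.toContinuousLinearMap lin
  set g : ℝ → ℝ := fun t => clin (Nt t * X * Mt t) with hg
  set g' : ℝ → ℝ := fun t =>
    -(dotProduct (Mt t *ᵥ x) ((-(Aᵀ * X) - X * A) *ᵥ (Mt t *ᵥ x))) with hg'
  have hcomm : ∀ t, Aᵀ * Nt t = Nt t * Aᵀ := fun t => by
    rw [hNt]; dsimp only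
    exact (((Commute.refl Aᵀ).smul_right t).exp_right ).eq
  have hval : ∀ t, clin (Aᵀ * Nt t * X * Mt t + Nt t * X * (A * Mt t)) = g' t := by
    intro t
    have hmat : Aᵀ * Nt t * X * Mt t + Nt t * X * (A * Mt t)
        = (Mt t)ᵀ * (-(-(Aᵀ * X) - X * A)) * Mt t := by
      rw [hcomm t, ← hNT t]
      have : -(-(Aᵀ * X) - X * A) = Aᵀ * X + X * A := by abel
      rw [this]
      noncomm_ring
    rw [hmat]
    show dotProduct x (((Mt t)ᵀ * (-(-(Aᵀ * X) - X * A)) * Mt t) *ᵥ x) = g' t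
    rw [StmtAux.quad_eq, hg']
    dsimp only
    rw [Matrix.neg_mulVec, dotProduct_neg]
  have hderiv : ∀ t, HasDerivAt g (g' t) t := by
    intro t
    have hM : HasDerivAt Mt (A * Mt t) t := hasDerivAt_exp_smul_const' A t
    have hN : HasDerivAt Nt (Aᵀ * Nt t) t := hasDerivAt_exp_smul_const' Aᵀ t
    have hF : HasDerivAt (fun s => Nt s * X * Mt s)
        (Aᵀ * Nt t * X * Mt t + Nt t * X * (A * Mt t)) t := by
      exact (hN.mul_const X).mul hM
    have hD := clin.hasFDerivAt.comp_hasDerivAt t hF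
    rw [← hval t]
    exact hD
  have hg'le : g' ≤ 0 := fun t => neg_nonpos.mpr (hQquad _)
  have hanti : Antitone g := antitone_of_hasDerivAt_nonpos hderiv hg'le
  have hg0 : g 0 = dotProduct x (X *ᵥ x) := by
    rw [hg]; dsimp only
    rw [hMt, hNt]; dsimp only
    rw [zero_smul, zero_smul, NormedSpace.exp_zero, one_mul, mul_one]
    rfl
  set B := NormedSpace.exp A with hB
  have hgk : ∀ k : ℕ, g (k : ℝ) = clin ((B ^ k)ᵀ * X * B ^ k) := by
    intro k
    have h1 : Mt (k : ℝ) = B ^ k := by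
      rw [hMt]; dsimp only
      rw [Nat.cast_smul_eq_nsmul, Matrix.exp_nsmul]
    have h2 : Nt (k : ℝ) = (B ^ k)ᵀ := by rw [hNT, h1]
    rw [hg]; dsimp only
    rw [h1, h2]
  have hBk := StmtAux.key_tendsto A hA
  let trl : Matrix (Fin n) (Fin n) ℝ →ₗ[ℝ] Matrix (Fin n) (Fin n) ℝ :=
    { toFun := fun C => Cᵀ
      map_add' := fun _ _ => Matrix.transpose_add _ _
      map_smul' := fun _ _ => Matrix.transpose_smul _ _ }
  have hT := (LinearMap.toContinuousLinearMap trl).continuous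
  have hlim : Tendsto (fun k : ℕ => g (k : ℝ)) atTop (nhds 0) := by
    have h3 : Tendsto (fun k : ℕ => (B ^ k)ᵀ * X * B ^ k) atTop (nhds (0ᵀ * X * 0)) := by
      have ht : Tendsto (fun k : ℕ => (B ^ k)ᵀ) atTop
          (nhds ((0 : Matrix (Fin n) (Fin n) ℝ)ᵀ)) := (hT.tendsto 0).comp hBk
      exact (ht.mul tendsto_const_nhds).mul hBk
    have h4 : (0ᵀ * X * (0 : Matrix (Fin n) (Fin n) ℝ)) = 0 := by simp
    rw [h4] at h3
    have h5 : Tendsto (fun k : ℕ => clin ((B ^ k)ᵀ * X * B ^ k)) atTop (nhds (clin 0)) :=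
      (clin.continuous.tendsto 0).comp h3
    rw [map_zero] at h5
    have h7 : (fun k : ℕ => g (k : ℝ)) = fun k : ℕ => clin ((B ^ k)ᵀ * X * B ^ k) := by
      funext k; exact hgk k
    rw [h7]
    exact h5
  have h6 : (0 : ℝ) ≤ g 0 := le_of_tendsto' hlim fun k => hanti (Nat.cast_nonneg k)
  rwa [hg0] at h6
end

section
/- Let (A,B,C,D) define a passive LTI system and let X be a symmetric positive definite solution of the KYP inequality, i.e., the block matrix [[-AᵀX - XA, Cᵀ - XB],[C - BᵀX, D + Dᵀ]] is positive semidefinite. Define J := (AX⁻¹ - X⁻ᵀAᵀ)/2, R := -(AX⁻¹ + X⁻ᵀAᵀ)/2, Q := X. Then (J - R)Q = A, J is skew-symmetric, and R is symmetric positive semidefinite. -/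
open Matrix

private lemma psd_smul_aux {k : ℕ} {M : Matrix (Fin k) (Fin k) ℝ} (h : M.PosSemidef)
    {c : ℝ} (hc : 0 ≤ c) : (c • M).PosSemidef := by
  refine .of_dotProduct_mulVec_nonneg (by unfold Matrix.IsHermitian; rw [conjTranspose_smul, h.1]; simp) fun x => ?_
  rw [smul_mulVec, dotProduct_smul]
  exact mul_nonneg hc (h.dotProduct_mulVec_nonneg x)

/-- If `X` is a symmetric positive definite solution of the KYP inequality for `(A,B,C,D)`,
then with `J := Skew(A X⁻¹)`, `R := -Sym(A X⁻¹)`, `Q := X` we have `(J - R) Q = A`,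
`J` is skew-symmetric and `R` is symmetric positive semidefinite. -/
theorem stmt_1 {n m : ℕ}
    (A : Matrix (Fin n) (Fin n) ℝ) (B : Matrix (Fin n) (Fin m) ℝ)
    (C : Matrix (Fin m) (Fin n) ℝ) (D : Matrix (Fin m) (Fin m) ℝ)
    (X : Matrix (Fin n) (Fin n) ℝ) (hX : X.PosDef)
    (hKYP : (Matrix.fromBlocks (-(Aᵀ * X) - X * A) (Cᵀ - X * B)
        (C - Bᵀ * X) (D + Dᵀ)).PosSemidef) :
    (((1 : ℝ) / 2) • (A * X⁻¹ - X⁻¹ᵀ * Aᵀ) - (-(((1 : ℝ) / 2) • (A * X⁻¹ + X⁻¹ᵀ * Aᵀ)))) * X = A ∧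
    (((1 : ℝ) / 2) • (A * X⁻¹ - X⁻¹ᵀ * Aᵀ))ᵀ = -(((1 : ℝ) / 2) • (A * X⁻¹ - X⁻¹ᵀ * Aᵀ)) ∧
    (-(((1 : ℝ) / 2) • (A * X⁻¹ + X⁻¹ᵀ * Aᵀ))).PosSemidef := by
  have hdet : IsUnit X.det := isUnit_iff_ne_zero.mpr hX.det_pos.ne'
  have hXs : Xᵀ = X := (by simpa using hX.isHermitian : X.IsSymm)
  have hXinvS : X⁻¹ᵀ = X⁻¹ := by rw [Matrix.transpose_nonsing_inv, hXs]
  have hinv : X⁻¹ * X = 1 := Matrix.nonsing_inv_mul X hdet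
  have hinv' : X * X⁻¹ = 1 := Matrix.mul_nonsing_inv X hdet
  refine ⟨?_, ?_, ?_⟩
  · have hsum : (((1 : ℝ) / 2) • (A * X⁻¹ - X⁻¹ᵀ * Aᵀ)
        - (-(((1 : ℝ) / 2) • (A * X⁻¹ + X⁻¹ᵀ * Aᵀ)))) = A * X⁻¹ := by
      module
    rw [hsum, Matrix.mul_assoc, hinv, Matrix.mul_one]
  · rw [transpose_smul, transpose_sub, transpose_mul, transpose_mul,
      transpose_transpose, transpose_transpose, ← smul_neg, neg_sub]
  · have h11 : (-(Aᵀ * X) - X * A).PosSemidef := by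
      have h := hKYP.submatrix (Sum.inl : Fin n → Fin n ⊕ Fin m)
      have he : (Matrix.fromBlocks (-(Aᵀ * X) - X * A) (Cᵀ - X * B)
          (C - Bᵀ * X) (D + Dᵀ)).submatrix (Sum.inl : Fin n → Fin n ⊕ Fin m) Sum.inl
          = -(Aᵀ * X) - X * A := by
        ext i j; simp [Matrix.submatrix, Matrix.fromBlocks]
      rwa [he] at h
    have h2 : (X⁻¹ * (-(Aᵀ * X) - X * A) * X⁻¹ᴴ).PosSemidef :=
      h11.mul_mul_conjTranspose_same X⁻¹
    have hH : X⁻¹ᴴ = X⁻¹ := hX.inv.isHermitian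
    rw [hH] at h2
    have heq : -(((1 : ℝ) / 2) • (A * X⁻¹ + X⁻¹ᵀ * Aᵀ))
        = ((1 : ℝ) / 2) • (X⁻¹ * (-(Aᵀ * X) - X * A) * X⁻¹) := by
      rw [hXinvS]
      have : X⁻¹ * (-(Aᵀ * X) - X * A) * X⁻¹
          = -(A * X⁻¹ + X⁻¹ * Aᵀ) := by
        rw [Matrix.mul_sub, Matrix.sub_mul, Matrix.mul_neg, Matrix.neg_mul]
        rw [show X⁻¹ * (Aᵀ * X) * X⁻¹ = X⁻¹ * Aᵀ * (X * X⁻¹) by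
          simp [Matrix.mul_assoc],
          show X⁻¹ * (X * A) * X⁻¹ = (X⁻¹ * X) * (A * X⁻¹) by simp [Matrix.mul_assoc],
          hinv, hinv', Matrix.mul_one, Matrix.one_mul]
        abel
      rw [this, smul_neg]
    rw [heq]
    exact psd_smul_aux h2 (by norm_num)
end
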